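/- arXiv:2409.16873 — 5 statements merged into one kernel-verified Lean document; each statement's English description precedes it below -/
import Mathlib

section
/- For every real number α₂ with 0 < α₂ < 1/2 and every z ∈ (-1, 1/(2α₂) - 1), we have log(1 + z) ≤ z - α₂·z². -/
private lemma hasDerivAt_aux (α x : ℝ) (hx : 0 < 1 + x) :
    HasDerivAt (fun z => z - α * z ^ 2 - Real.log (1 + z))
      (1 - α * (2 * x) - 1 / (1 + x)) x := by
  have h1 : HasDerivAt (fun z : ℝ => 1 + z) 1 x := by
    simpa using (hasDerivAt_id x).const_add 1
  have h2 : HasDerivAt (fun z => Real.log (1 + z)) (1 / (1 + x)) x := by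
    have := (Real.hasDerivAt_log hx.ne').comp x h1
    simpa [one_div, Function.comp_def] using this
  have h3 : HasDerivAt (fun z : ℝ => z - α * z ^ 2) (1 - α * (2 * x)) x := by
    have hp : HasDerivAt (fun z : ℝ => z ^ 2) (2 * x) x := by
      simpa using hasDerivAt_pow 2 x
    exact (hasDerivAt_id x).sub (hp.const_mul α)
  exact h3.sub h2

theorem log_one_add_le (α₂ z : ℝ) (hα0 : 0 < α₂) (hα : α₂ < 1/2) (hz1 : -1 < z) (hz2 : z < 1/(2*α₂) - 1) :
    Real.log (1 + z) ≤ z - α₂ * z^2 := by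
  set f : ℝ → ℝ := fun z => z - α₂ * z ^ 2 - Real.log (1 + z) with hf
  have hf0 : f 0 = 0 := by simp [hf]
  have key : 0 ≤ f z := by
    rcases le_or_gt 0 z with hz | hz
    · -- monotone on [0, z]
      have hmono : MonotoneOn f (Set.Icc 0 z) := by
        apply monotoneOn_of_deriv_nonneg (convex_Icc 0 z)
        · apply ContinuousOn.mono (s := Set.Icc 0 z) ?_ le_rfl
          intro x hx
          have hx1 : 0 < 1 + x := by
            have := hx.1; linarith
          exact (hasDerivAt_aux α₂ x hx1).continuousAt.continuousWithinAt
        · intro x hx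
          rw [interior_Icc] at hx
          have hx1 : 0 < 1 + x := by have := hx.1; linarith
          exact (hasDerivAt_aux α₂ x hx1).differentiableAt.differentiableWithinAt
        · intro x hx
          rw [interior_Icc] at hx
          have hx1 : 0 < 1 + x := by have := hx.1; linarith
          rw [(hasDerivAt_aux α₂ x hx1).deriv]
          have heq : 1 - α₂ * (2 * x) - 1 / (1 + x)
              = x * (1 - 2 * α₂ * (1 + x)) / (1 + x) := by
            field_simp; ring
          rw [heq]
          have hb : 2 * α₂ * (1 + x) < 1 := by
            have h2 : 1 + x < 1 / (2 * α₂) := by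
              have := hx.2; linarith
            have h2a : 0 < 2 * α₂ := by linarith
            calc 2 * α₂ * (1 + x) < 2 * α₂ * (1 / (2 * α₂)) := by
                  exact mul_lt_mul_of_pos_left h2 h2a
              _ = 1 := by field_simp
          exact div_nonneg (mul_nonneg hx.1.le (by linarith)) hx1.le
      have := hmono (Set.left_mem_Icc.2 hz) (Set.right_mem_Icc.2 hz) hz
      linarith [hf0 ▸ this]
    · -- antitone on [z, 0]
      have hmono : AntitoneOn f (Set.Icc z 0) := by
        apply antitoneOn_of_deriv_nonpos (convex_Icc z 0)
        · intro x hx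
          have hx1 : 0 < 1 + x := by have := hx.1; linarith
          exact (hasDerivAt_aux α₂ x hx1).continuousAt.continuousWithinAt
        · intro x hx
          rw [interior_Icc] at hx
          have hx1 : 0 < 1 + x := by have := hx.1; linarith
          exact (hasDerivAt_aux α₂ x hx1).differentiableAt.differentiableWithinAt
        · intro x hx
          rw [interior_Icc] at hx
          have hx1 : 0 < 1 + x := by have := hx.1; linarith
          rw [(hasDerivAt_aux α₂ x hx1).deriv]
          have heq : 1 - α₂ * (2 * x) - 1 / (1 + x)
              = x * (1 - 2 * α₂ * (1 + x)) / (1 + x) := by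
            field_simp; ring
          rw [heq]
          have hb : 2 * α₂ * (1 + x) < 1 := by
            nlinarith [hx.2]
          have hxneg : x < 0 := hx.2
          have : x * (1 - 2 * α₂ * (1 + x)) ≤ 0 :=
            mul_nonpos_of_nonpos_of_nonneg hxneg.le (by linarith)
          exact div_nonpos_of_nonpos_of_nonneg this hx1.le
      have := hmono (Set.left_mem_Icc.2 hz.le) (Set.right_mem_Icc.2 hz.le) hz.le
      linarith [hf0 ▸ this]
  have : Real.log (1 + z) ≤ z - α₂ * z ^ 2 := by
    have := key
    simp only [hf] at this
    linarith
  exact this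
end

section
/- Let 0 ≤ m < a < M ≤ 1, k ≥ 0, and b, c > 1. Define ω(t) = -k·t - (b-1)·log t - (c-1)·log(1-t) for t ∈ (0,1). If ω′(a) > 0 (so also ω′(M) > 0 by convexity), then ∫_a^M e^{-ω(t)} dt ≥ (e^{-k·a} a^{b-1}(1-a)^{c-1} / ω′(M)) · (1 - exp(-(M-a)·ω′(a))). -/
open Real in
theorem int_exp_neg_omega_lower (m a M k b c : ℝ) (hm : 0 ≤ m) (hma : m < a) (haM : a < M)
    (hM : M < 1) (hk : 0 ≤ k) (hb : 1 < b) (hc : 1 < c)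
    (hda : 0 < -k - (b - 1) / a + (c - 1) / (1 - a)) :
    ∫ t in a..M, exp (-(-(k * t) - (b - 1) * log t - (c - 1) * log (1 - t)))
      ≥ exp (-(k * a)) * a ^ (b - 1) * (1 - a) ^ (c - 1)
          / (-k - (b - 1) / M + (c - 1) / (1 - M))
        * (1 - exp (-((M - a) * (-k - (b - 1) / a + (c - 1) / (1 - a))))) := by
  have ha : 0 < a := lt_of_le_of_lt hm hma
  have hM0 : 0 < M := ha.trans haM
  have h1M : 0 < 1 - M := by linarith
  have h1a : 0 < 1 - a := by linarith
  set d : ℝ := -k - (b - 1) / a + (c - 1) / (1 - a) with hd_def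
  set D : ℝ := -k - (b - 1) / M + (c - 1) / (1 - M) with hD_def
  have hb0 : (0:ℝ) ≤ b - 1 := by linarith
  have hc0 : (0:ℝ) ≤ c - 1 := by linarith
  have hdD : d ≤ D := by
    have h1 : (b - 1) / M ≤ (b - 1) / a := div_le_div_of_nonneg_left hb0 ha haM.le
    have h2 : (c - 1) / (1 - a) ≤ (c - 1) / (1 - M) :=
      div_le_div_of_nonneg_left hc0 h1M (by linarith)
    simp only [hd_def, hD_def]; linarith
  have hD0 : 0 < D := lt_of_lt_of_le hda hdD
  set C : ℝ := exp (-(k * a)) * a ^ (b - 1) * (1 - a) ^ (c - 1) with hC_def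
  have hC0 : 0 < C := by positivity
  -- pointwise bound
  have hpt : ∀ t ∈ Set.Icc a M,
      C * exp (-(D * (t - a))) ≤ exp (-(-(k * t) - (b - 1) * log t - (c - 1) * log (1 - t))) := by
    intro t ht
    obtain ⟨hat, htM⟩ := ht
    have ht0 : 0 < t := ha.trans_le hat
    have h1t : 0 < 1 - t := by linarith
    have hC_exp : C = exp (-(k * a) + (b - 1) * log a + (c - 1) * log (1 - a)) := by
      rw [hC_def, Real.rpow_def_of_pos ha, Real.rpow_def_of_pos h1a, ← Real.exp_add,
        ← Real.exp_add]
      ring_nf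
    rw [hC_exp, ← Real.exp_add, Real.exp_le_exp]
    have h1 : log a - log t ≤ (a - t) / t := by
      have := Real.log_le_sub_one_of_pos (show 0 < a / t by positivity)
      rw [Real.log_div ha.ne' ht0.ne'] at this
      have : log a - log t ≤ a / t - 1 := this
      have heq : a / t - 1 = (a - t) / t := by field_simp
      linarith [heq ▸ this]
    have h2 : log (1 - a) - log (1 - t) ≤ (t - a) / (1 - t) := by
      have := Real.log_le_sub_one_of_pos (show 0 < (1 - a) / (1 - t) by positivity)
      rw [Real.log_div h1a.ne' h1t.ne'] at this
      have heq : (1 - a) / (1 - t) - 1 = (t - a) / (1 - t) := by field_simp; ring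
      linarith
    have h3 : (a - t) / t ≤ (a - t) / M := by
      rw [div_le_div_iff₀ ht0 hM0]
      nlinarith
    have h4 : (t - a) / (1 - t) ≤ (t - a) / (1 - M) := by
      rw [div_le_div_iff₀ h1t h1M]
      nlinarith
    have h5 : (b - 1) * (log a - log t) ≤ (b - 1) * ((a - t) / M) :=
      mul_le_mul_of_nonneg_left (h1.trans h3) hb0
    have h6 : (c - 1) * (log (1 - a) - log (1 - t)) ≤ (c - 1) * ((t - a) / (1 - M)) :=
      mul_le_mul_of_nonneg_left (h2.trans h4) hc0
    have hDexp : D * (t - a) = -(k * (t - a)) + (b - 1) * ((a - t) / M)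
        + (c - 1) * ((t - a) / (1 - M)) := by
      simp only [hD_def]; field_simp; ring
    have hka : 0 ≤ k * a := mul_nonneg hk ha.le
    have hkt : 0 ≤ k * (t - a) := mul_nonneg hk (by linarith)
    have hgoal : -(k * a) + (b - 1) * log a + (c - 1) * log (1 - a) + -(D * (t - a))
        ≤ k * t + (b - 1) * log t + (c - 1) * log (1 - t) := by
      rw [hDexp]; linarith [h5, h6, hka, hkt]
    linarith [hgoal]
  -- continuity / integrability of the RHS integrand
  have hcont : ContinuousOn
      (fun t => exp (-(-(k * t) - (b - 1) * log t - (c - 1) * log (1 - t)))) (Set.Icc a M) := by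
    apply Real.continuous_exp.comp_continuousOn
    apply ContinuousOn.neg
    apply ContinuousOn.sub
    apply ContinuousOn.sub
    · exact (continuous_const.mul continuous_id).neg.continuousOn
    · exact continuousOn_const.mul (Real.continuousOn_log.comp continuousOn_id
        (fun x hx => by simp; exact (ha.trans_le hx.1).ne'))
    · exact continuousOn_const.mul ((Real.continuousOn_log.comp
        (continuous_const.sub continuous_id).continuousOn
        (fun x hx => by simp; intro h; nlinarith [hx.2])))
  have huIcc : Set.uIcc a M = Set.Icc a M := Set.uIcc_of_le haM.le
  have hint2 : IntervalIntegrable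
      (fun t => exp (-(-(k * t) - (b - 1) * log t - (c - 1) * log (1 - t))))
      MeasureTheory.volume a M :=
    ContinuousOn.intervalIntegrable (huIcc ▸ hcont)
  have hint1 : IntervalIntegrable (fun t => C * exp (-(D * (t - a))))
      MeasureTheory.volume a M :=
    (Continuous.intervalIntegrable (continuous_const.mul (Real.continuous_exp.comp ((continuous_const.mul (continuous_id.sub continuous_const)).neg))) a M)
  -- antiderivative computation
  have hanti : ∀ t : ℝ, HasDerivAt (fun s => -exp (-(D * (s - a))) / D)
      (exp (-(D * (t - a)))) t := by
    intro t
    have h1 : HasDerivAt (fun s : ℝ => -(D * (s - a))) (-D) t := by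
      have := (((hasDerivAt_id t).sub_const a).const_mul D).neg
      rw [mul_one] at this
      exact this
    have h2 := (h1.exp.div_const D).neg
    have h3 : -(exp (-(D * (t - a))) * -D / D) = exp (-(D * (t - a))) := by
      rw [mul_neg, neg_div, neg_neg, mul_div_assoc, div_self hD0.ne', mul_one]
    have h4 := h3 ▸ h2
    have h5 : (fun s => -exp (-(D * (s - a))) / D) = (-fun x => exp (-(D * (x - a))) / D) := by
      funext s
      simp [neg_div]
    rw [h5]
    exact h4
  have hcalc : (∫ t in a..M, exp (-(D * (t - a))))
      = (1 - exp (-(D * (M - a)))) / D := by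
    rw [intervalIntegral.integral_eq_sub_of_hasDerivAt (fun t _ => hanti t)
      (Continuous.intervalIntegrable (Real.continuous_exp.comp ((continuous_const.mul (continuous_id.sub continuous_const)).neg)) a M)]
    have : -(D * (a - a)) = 0 := by ring
    rw [this, Real.exp_zero]
    ring
  have hmono := intervalIntegral.integral_mono_on haM.le hint1 hint2
    (fun t ht => hpt t ht)
  rw [intervalIntegral.integral_const_mul, hcalc] at hmono
  -- compare exponentials
  have hexp_le : exp (-(D * (M - a))) ≤ exp (-((M - a) * d)) := by
    apply Real.exp_le_exp.2
    nlinarith [hdD, haM]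
  have hfinal : C / D * (1 - exp (-((M - a) * d)))
      ≤ C * ((1 - exp (-(D * (M - a)))) / D) := by
    rw [div_mul_eq_mul_div, mul_div_assoc]
    gcongr
  rw [ge_iff_le]
  exact le_trans hfinal hmono
end

section
/- Let 0 < m < a < 1, k ≥ 0, b, c > 1 and ω(t) = -k·t - (b-1)·log t - (c-1)·log(1-t). If ω′(a) < 0, then ∫_m^a e^{-ω(t)} dt ≥ (e^{-k·a} a^{b-1}(1-a)^{c-1} / (-ω′(m))) · (1 - exp((a-m)·ω′(a))). -/
open Real in
theorem int_exp_neg_omega_lower' (m a k b c : ℝ) (hm : 0 < m) (hma : m < a) (ha : a < 1)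
    (hk : 0 ≤ k) (hb : 1 < b) (hc : 1 < c)
    (hda : -k - (b - 1) / a + (c - 1) / (1 - a) < 0) :
    ∫ t in m..a, exp (-(-(k * t) - (b - 1) * log t - (c - 1) * log (1 - t)))
      ≥ exp (-(k * a)) * a ^ (b - 1) * (1 - a) ^ (c - 1)
          / (-(-k - (b - 1) / m + (c - 1) / (1 - m)))
        * (1 - exp ((a - m) * (-k - (b - 1) / a + (c - 1) / (1 - a)))) := by
  have ha0 : 0 < a := hm.trans hma
  have h1a : 0 < 1 - a := by linarith
  have h1m : 0 < 1 - m := by linarith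
  have hb0 : (0:ℝ) < b - 1 := by linarith
  have hc0 : (0:ℝ) < c - 1 := by linarith
  set A : ℝ := -k - (b - 1) / a + (c - 1) / (1 - a) with hA
  set L : ℝ := -k - (b - 1) / m + (c - 1) / (1 - m) with hL
  have hLA : L ≤ A := by
    rw [hA, hL]
    have h1 : (b - 1) / a ≤ (b - 1) / m := by gcongr <;> linarith
    have h2 : (c - 1) / (1 - m) ≤ (c - 1) / (1 - a) := by gcongr <;> linarith
    linarith
  have hL0 : L < 0 := lt_of_le_of_lt hLA hda
  have hnL : 0 < -L := by linarith
  set f : ℝ → ℝ := fun t => -(k * t) - (b - 1) * log t - (c - 1) * log (1 - t) with hf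
  -- monotonicity of g t = f t - L * t on [m, a]
  have hderiv : ∀ t ∈ Set.Ioo m a, HasDerivAt (fun t => f t - L * t)
      (-k - (b - 1) / t + (c - 1) / (1 - t) - L) t := by
    intro t ht
    have ht0 : 0 < t := lt_trans hm ht.1
    have ht1 : 0 < 1 - t := by have := ht.2; linarith
    have d1 : HasDerivAt (fun t : ℝ => -(k * t)) (-k) t := by
      simpa [Pi.neg_def] using ((hasDerivAt_id t).const_mul k).neg
    have d2 : HasDerivAt (fun t : ℝ => log t) t⁻¹ t := Real.hasDerivAt_log (ne_of_gt ht0)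
    have d3 : HasDerivAt (fun t : ℝ => (1:ℝ) - t) (-1) t := by
      simpa [Pi.sub_def] using (hasDerivAt_const t (1:ℝ)).sub (hasDerivAt_id t)
    have d4 : HasDerivAt (fun t : ℝ => log (1 - t)) ((1 - t)⁻¹ * -1) t :=
      (Real.hasDerivAt_log (ne_of_gt ht1)).comp t d3
    have d5 : HasDerivAt (fun t : ℝ => L * t) L t := by
      simpa using (hasDerivAt_id t).const_mul L
    have := ((d1.sub (d2.const_mul (b - 1))).sub (d4.const_mul (c - 1))).sub d5
    refine this.congr_deriv ?_
    simp only [div_eq_mul_inv]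
    ring
  have hgmono : MonotoneOn (fun t => f t - L * t) (Set.Icc m a) := by
    apply monotoneOn_of_deriv_nonneg (convex_Icc m a)
    · apply ContinuousOn.sub
      · apply ContinuousOn.sub
        · apply ContinuousOn.sub
          · exact (continuous_const.mul continuous_id).neg.continuousOn
          · apply ContinuousOn.mul continuousOn_const
            apply ContinuousOn.log continuousOn_id
            intro x hx; exact ne_of_gt (lt_of_lt_of_le hm hx.1)
        · apply ContinuousOn.mul continuousOn_const
          apply ContinuousOn.log (continuousOn_const.sub continuousOn_id)
          intro x hx
          have : x < 1 := lt_of_le_of_lt hx.2 ha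
          show (1:ℝ) - x ≠ 0; intro h; linarith [sub_eq_zero.mp h]
      · exact (continuous_const.mul continuous_id).continuousOn
    · rw [interior_Icc]
      intro t ht
      exact (hderiv t ht).differentiableAt.differentiableWithinAt
    · rw [interior_Icc]
      intro t ht
      rw [(hderiv t ht).deriv]
      have ht0 : 0 < t := lt_trans hm ht.1
      have ht1 : 0 < 1 - t := by have := ht.2; linarith
      have h1 : (b - 1) / t ≤ (b - 1) / m := by gcongr <;> linarith [ht.1]
      have h2 : (c - 1) / (1 - m) ≤ (c - 1) / (1 - t) := by gcongr <;> linarith [ht.1]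
      rw [hL]; linarith
  have key : ∀ t ∈ Set.Icc m a, exp (-(f a) + (a - t) * L) ≤ exp (-(f t)) := by
    intro t ht
    have := hgmono ht (Set.right_mem_Icc.mpr hma.le) ht.2
    apply Real.exp_le_exp.mpr
    simp only at this ⊢
    linarith
  -- continuity of exp(-f) on [m,a]
  have hcontf : ContinuousOn (fun t => exp (-(f t))) (Set.Icc m a) := by
    apply ContinuousOn.rexp
    apply ContinuousOn.neg
    apply ContinuousOn.sub
    · apply ContinuousOn.sub
      · exact (continuous_const.mul continuous_id).neg.continuousOn
      · apply ContinuousOn.mul continuousOn_const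
        apply ContinuousOn.log continuousOn_id
        intro x hx; exact ne_of_gt (lt_of_lt_of_le hm hx.1)
    · apply ContinuousOn.mul continuousOn_const
      apply ContinuousOn.log (continuousOn_const.sub continuousOn_id)
      intro x hx
      have : x < 1 := lt_of_le_of_lt hx.2 ha
      show (1:ℝ) - x ≠ 0; intro h; linarith [sub_eq_zero.mp h]
  -- compute lower integral via FTC
  have hFTC : ∫ t in m..a, exp (-(f a) + (a - t) * L)
      = exp (-(f a)) / (-L) - exp (-(f a) + (a - m) * L) / (-L) := by
    have : ∀ t ∈ Set.uIcc m a, HasDerivAt (fun t => exp (-(f a) + (a - t) * L) / (-L))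
        (exp (-(f a) + (a - t) * L)) t := by
      intro t _
      have d1 : HasDerivAt (fun t : ℝ => -(f a) + (a - t) * L) (-L) t := by
        have : HasDerivAt (fun t : ℝ => (a - t)) (-1) t := by
          simpa [Pi.sub_def] using (hasDerivAt_const t a).sub (hasDerivAt_id t)
        simpa using ((this.mul_const L).const_add (-(f a)))
      have := (d1.exp).div_const (-L)
      refine this.congr_deriv ?_
      rw [mul_div_assoc, div_self (neg_ne_zero.mpr hL0.ne), mul_one]
    rw [intervalIntegral.integral_eq_sub_of_hasDerivAt this]
    · simp
    · apply ContinuousOn.intervalIntegrable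
      exact (continuousOn_const.add ((continuousOn_const.sub continuousOn_id).mul
        continuousOn_const)).rexp
  have hint1 : ∫ t in m..a, exp (-(f a) + (a - t) * L) ≤ ∫ t in m..a, exp (-(f t)) := by
    apply intervalIntegral.integral_mono_on hma.le
    · apply ContinuousOn.intervalIntegrable
      rw [Set.uIcc_of_le hma.le]
      exact (continuousOn_const.add ((continuousOn_const.sub continuousOn_id).mul
        continuousOn_const)).rexp
    · apply ContinuousOn.intervalIntegrable
      rw [Set.uIcc_of_le hma.le]; exact hcontf
    · exact key
  -- identify exp(-(f a))
  have hexp : exp (-(f a)) = exp (k * a) * a ^ (b - 1) * (1 - a) ^ (c - 1) := by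
    rw [hf]
    simp only
    rw [Real.rpow_def_of_pos ha0, Real.rpow_def_of_pos h1a, ← Real.exp_add, ← Real.exp_add]
    ring_nf
  set N : ℝ := exp (-(k * a)) * a ^ (b - 1) * (1 - a) ^ (c - 1) with hN
  have hN0 : 0 < N := by
    apply mul_pos (mul_pos (Real.exp_pos _) _) _
    · exact Real.rpow_pos_of_pos ha0 _
    · exact Real.rpow_pos_of_pos h1a _
  have hNle : N ≤ exp (-(f a)) := by
    rw [hexp, hN]
    have : exp (-(k * a)) ≤ exp (k * a) := by
      apply Real.exp_le_exp.mpr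
      nlinarith
    have p1 : (0:ℝ) < a ^ (b-1) := Real.rpow_pos_of_pos ha0 _
    have p2 : (0:ℝ) < (1-a) ^ (c-1) := Real.rpow_pos_of_pos h1a _
    exact mul_le_mul_of_nonneg_right (mul_le_mul_of_nonneg_right this p1.le) p2.le
  have hexpAL : exp ((a - m) * L) ≤ exp ((a - m) * A) := by
    apply Real.exp_le_exp.mpr
    apply mul_le_mul_of_nonneg_left hLA (by linarith)
  have hexpA1 : exp ((a - m) * A) ≤ 1 := by
    rw [show (1:ℝ) = exp 0 by simp]
    apply Real.exp_le_exp.mpr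
    apply mul_nonpos_of_nonneg_of_nonpos (by linarith) hda.le
  calc N / (-L) * (1 - exp ((a - m) * A))
      ≤ exp (-(f a)) / (-L) * (1 - exp ((a - m) * L)) := by
        apply mul_le_mul
        · exact div_le_div_of_nonneg_right hNle hnL.le
        · linarith
        · linarith
        · positivity
    _ = ∫ t in m..a, exp (-(f a) + (a - t) * L) := by
        rw [hFTC, Real.exp_add]
        ring
    _ ≤ ∫ t in m..a, exp (-(f t)) := hint1
end

section
/- Fix x > 1 and 0 < δ < (x-1)/2, let p₁, p₂, n be positive integers, p = p₁ + p₂, and for real numbers x₁ ≤ x₂ ≤ ⋯ ≤ xₙ in [0,1] satisfying p₁(1-δ)/p < x₁ and x_{n-1} < p₁(1+δ)/p and xₙ > p₁x/p, setting x̄ᵢ = (p·xᵢ - p₁)/(p₁(x-1)) and α₁ = 1/2 + δ/(x-1), we have ∏_{i=1}^{n-1}(xₙ - xᵢ) ≥ (p₁(x-1)/p)^{n-1} · exp( -∑_{i=1}^{n-1} x̄ᵢ - α₁ ∑_{i=1}^{n-1} x̄ᵢ² ). -/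
open Real Finset

lemma log_lb (z t : ℝ) (hz : |z| ≤ t) (ht : t ≤ 1/2) :
    -z - (1/2 + t) * z^2 ≤ Real.log (1 - z) := by
  have ha0 : 0 ≤ |z| := abs_nonneg z
  have ha : |z| ≤ 1/2 := le_trans hz ht
  have h1 : |z| < 1 := by linarith
  have key := Real.abs_log_sub_add_sum_range_le h1 4
  rw [abs_le] at key
  have hsum : (∑ i ∈ range 4, z ^ (i + 1) / (i + 1)) =
      z + z^2/2 + z^3/3 + z^4/4 := by
    simp [Finset.sum_range_succ]
    ring
  rw [hsum] at key
  have hden : (0:ℝ) < 1 - |z| := by linarith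
  have h5 : |z|^5 / (1 - |z|) ≤ 2 * |z|^5 := by
    rw [div_le_iff₀ hden]
    nlinarith [pow_nonneg ha0 5]
  have hz2 : z^2 = |z|^2 := (sq_abs z).symm
  have hz3 : z^3 ≤ |z|^3 := by
    calc z^3 ≤ |z^3| := le_abs_self _
    _ = |z|^3 := abs_pow z 3
  have hz4 : z^4 = |z|^4 := by rw [← abs_pow]; exact (abs_of_nonneg (by positivity)).symm
  -- need: z^3/3 + z^4/4 + |z|^5/(1-|z|) ≤ t * z^2
  have goal2 : z^3/3 + z^4/4 + |z|^5/(1-|z|) ≤ t * z^2 := by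
    have : |z|^3/3 + |z|^4/4 + 2*|z|^5 ≤ t * |z|^2 := by
      have e1 : |z|^3 ≤ t * |z|^2 := by nlinarith [mul_le_mul_of_nonneg_left hz (pow_nonneg ha0 2)]
      have e2 : |z|^4 ≤ |z|^3/2 := by nlinarith [pow_nonneg ha0 3]
      have e3 : |z|^5 ≤ |z|^4/2 := by nlinarith [pow_nonneg ha0 4]
      nlinarith
    nlinarith
  linarith [key.1]

lemma exp_lb (z t : ℝ) (hz : |z| ≤ t) (ht : t ≤ 1/2) :
    Real.exp (-z - (1/2 + t) * z^2) ≤ 1 - z := by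
  have h1 : z < 1 := by
    have := abs_le.mp (le_trans hz ht)
    linarith [this.2]
  have h0 : 0 < 1 - z := by linarith
  calc Real.exp (-z - (1/2 + t) * z^2) ≤ Real.exp (Real.log (1 - z)) :=
        Real.exp_le_exp.mpr (log_lb z t hz ht)
    _ = 1 - z := Real.exp_log h0

open Real in
theorem interaction_lower_bound (x δ : ℝ) (hx : 1 < x) (hδ0 : 0 < δ) (hδ : δ < (x - 1) / 2)
    (n p₁ p₂ : ℕ) (hn : 2 ≤ n) (hp₁ : 0 < p₁) (hp₂ : 0 < p₂)
    (xs : ℕ → ℝ)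
    (hmono : ∀ i, 1 ≤ i → i < n → xs i ≤ xs (i + 1))
    (hrange : ∀ i, 1 ≤ i → i ≤ n → xs i ∈ Set.Icc (0 : ℝ) 1)
    (h1 : (p₁ : ℝ) * (1 - δ) / (p₁ + p₂) < xs 1)
    (h2 : xs (n - 1) < (p₁ : ℝ) * (1 + δ) / (p₁ + p₂))
    (h3 : (p₁ : ℝ) * x / (p₁ + p₂) < xs n) :
    ∏ i ∈ Finset.Icc 1 (n - 1), (xs n - xs i)
      ≥ ((p₁ : ℝ) * (x - 1) / (p₁ + p₂)) ^ (n - 1)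
        * exp (-(∑ i ∈ Finset.Icc 1 (n - 1),
              ((p₁ + p₂ : ℝ) * xs i - p₁) / (p₁ * (x - 1)))
            - (1 / 2 + δ / (x - 1))
              * ∑ i ∈ Finset.Icc 1 (n - 1),
                  (((p₁ + p₂ : ℝ) * xs i - p₁) / (p₁ * (x - 1))) ^ 2) := by
  have hx1 : (0:ℝ) < x - 1 := by linarith
  have hp1 : (0:ℝ) < (p₁:ℝ) := by exact_mod_cast hp₁
  have hp : (0:ℝ) < (p₁:ℝ) + p₂ := by positivity
  set c : ℝ := (p₁ : ℝ) * (x - 1) / (p₁ + p₂) with hc_def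
  have hc : 0 < c := by positivity
  set t : ℝ := δ / (x - 1) with ht_def
  have ht2 : t ≤ 1/2 := by
    rw [ht_def, div_le_iff₀ hx1]; linarith
  set z : ℕ → ℝ := fun i => ((p₁ + p₂ : ℝ) * xs i - p₁) / (p₁ * (x - 1)) with hz_def
  -- monotonicity chain
  have hchain : ∀ j, j ≤ n → ∀ i, 1 ≤ i → i ≤ j → xs i ≤ xs j := by
    intro j
    induction j with
    | zero => intro _ i hi hij; omega
    | succ k ih =>
      intro hk i hi hij
      rcases Nat.lt_or_ge i (k+1) with h | h
      · have hik : i ≤ k := by omega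
        have h1k : 1 ≤ k := by omega
        calc xs i ≤ xs k := ih (by omega) i hi hik
          _ ≤ xs (k+1) := hmono k h1k (by omega)
      · have : i = k+1 := by omega
        rw [this]
  have habs : ∀ i ∈ Finset.Icc 1 (n-1), |z i| ≤ t := by
    intro i hi
    rw [Finset.mem_Icc] at hi
    have hlow : xs 1 ≤ xs i := hchain i (by omega) 1 le_rfl hi.1
    have hhigh : xs i ≤ xs (n-1) := hchain (n-1) (by omega) i hi.1 hi.2
    have hl : (p₁ : ℝ) * (1 - δ) / (p₁ + p₂) < xs i := lt_of_lt_of_le h1 hlow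
    have hh : xs i < (p₁ : ℝ) * (1 + δ) / (p₁ + p₂) := lt_of_le_of_lt hhigh h2
    rw [div_lt_iff₀ hp] at hl
    rw [lt_div_iff₀ hp] at hh
    rw [hz_def, ht_def, abs_le]
    constructor
    · rw [le_div_iff₀ (by positivity)]
      have : -(δ / (x-1)) * ((p₁:ℝ) * (x-1)) = -(δ * p₁) := by field_simp
      rw [this]; nlinarith
    · rw [div_le_div_iff₀ (by positivity) hx1]
      nlinarith
  have hkey : ∀ i ∈ Finset.Icc 1 (n-1),
      c * Real.exp (-(z i) - (1/2 + t) * (z i)^2) ≤ xs n - xs i := by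
    intro i hi
    have hz1 := habs i hi
    have hexp := exp_lb (z i) t hz1 ht2
    have step1 : c * Real.exp (-(z i) - (1/2 + t) * (z i)^2) ≤ c * (1 - z i) :=
      mul_le_mul_of_nonneg_left hexp hc.le
    refine le_trans step1 ?_
    have hid : c * (1 - z i) = ((p₁:ℝ) * x - ((p₁:ℝ) + p₂) * xs i) / ((p₁:ℝ) + p₂) := by
      rw [hc_def, hz_def]; field_simp; ring
    rw [hid]
    have hxn : (p₁ : ℝ) * x / (p₁ + p₂) < xs n := h3
    rw [div_lt_iff₀ hp] at hxn
    rw [div_le_iff₀ hp]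
    nlinarith
  calc ∏ i ∈ Finset.Icc 1 (n - 1), (xs n - xs i)
      ≥ ∏ i ∈ Finset.Icc 1 (n - 1), (c * Real.exp (-(z i) - (1/2 + t) * (z i)^2)) := by
        apply Finset.prod_le_prod
        · intro i hi; positivity
        · exact hkey
    _ = c ^ (n-1) * Real.exp (-(∑ i ∈ Finset.Icc 1 (n - 1), z i)
          - (1/2 + t) * ∑ i ∈ Finset.Icc 1 (n - 1), (z i)^2) := by
        rw [Finset.prod_mul_distrib, Finset.prod_const, ← Real.exp_sum,
          Nat.card_Icc, Nat.add_sub_cancel]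
        congr 1
        rw [Finset.sum_sub_distrib, Finset.sum_neg_distrib, Finset.mul_sum]
end

section
/- Fix x > 1, positive integers n, p₁, p₂, set p = p₁+p₂. For real numbers 0 ≤ x₁ ≤ ⋯ ≤ xₙ ≤ 1 with xₙ > p₁x/p, we have ∏_{i=1}^{n-1}(xₙ - xᵢ) ≤ (p₁(x-1)/p)^{n-1} · exp( ((n-1)p/(p₁(x-1)))·(xₙ - p₁x/p) - ∑_{i=1}^{n-1} (p·xᵢ - p₁)/(p₁(x-1)) ). -/
open Real in
theorem interaction_upper_bound (x : ℝ) (hx : 1 < x) (n p₁ p₂ : ℕ) (hn : 1 ≤ n)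
    (hp₁ : 0 < p₁) (hp₂ : 0 < p₂) (xs : ℕ → ℝ)
    (hmono : ∀ i, 1 ≤ i → i < n → xs i ≤ xs (i + 1))
    (hrange : ∀ i, 1 ≤ i → i ≤ n → xs i ∈ Set.Icc (0 : ℝ) 1)
    (h3 : (p₁ : ℝ) * x / (p₁ + p₂) < xs n) :
    ∏ i ∈ Finset.Icc 1 (n - 1), (xs n - xs i)
      ≤ ((p₁ : ℝ) * (x - 1) / (p₁ + p₂)) ^ (n - 1)
        * exp ((n - 1 : ℝ) * (p₁ + p₂) / (p₁ * (x - 1))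
              * (xs n - (p₁ : ℝ) * x / (p₁ + p₂))
            - ∑ i ∈ Finset.Icc 1 (n - 1),
                ((p₁ + p₂ : ℝ) * xs i - p₁) / (p₁ * (x - 1))) := by
  have hP : (0 : ℝ) < (p₁ : ℝ) + p₂ := by positivity
  have hp₁' : (0 : ℝ) < p₁ := by exact_mod_cast hp₁
  have hx1 : (0 : ℝ) < x - 1 := by linarith
  set P : ℝ := (p₁ : ℝ) + p₂ with hPdef
  set C : ℝ := (p₁ : ℝ) * (x - 1) / P with hCdef
  have hC : 0 < C := by positivity
  set u : ℕ → ℝ := fun i =>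
    (P * xs n - p₁ * x) / (p₁ * (x - 1)) - (P * xs i - p₁) / (p₁ * (x - 1)) with hudef
  -- monotone up to n
  have hle : ∀ j, 1 ≤ j → j ≤ n → xs j ≤ xs n := by
    intro j h1 hj
    have : ∀ k, j + k ≤ n → xs j ≤ xs (j + k) := by
      intro k
      induction k with
      | zero => intro _; simp
      | succ m ih =>
        intro hk
        have h1' : j + m ≤ n := by omega
        have := hmono (j + m) (by omega) (by omega)
        have := ih h1'
        calc xs j ≤ xs (j + m) := ih h1'
          _ ≤ xs (j + m + 1) := hmono (j + m) (by omega) (by omega)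
          _ = xs (j + (m + 1)) := by ring_nf
    have := this (n - j) (by omega)
    rwa [Nat.add_sub_cancel' hj] at this
  -- key per-factor bound
  have key : ∀ i ∈ Finset.Icc 1 (n - 1), xs n - xs i ≤ C * Real.exp (u i) := by
    intro i hi
    have heq : xs n - xs i = C * (1 + u i) := by
      rw [hCdef, hudef, hPdef]
      field_simp
      ring
    rw [heq]
    have := Real.add_one_le_exp (u i)
    nlinarith [Real.add_one_le_exp (u i), hC]
  have hnonneg : ∀ i ∈ Finset.Icc 1 (n - 1), 0 ≤ xs n - xs i := by
    intro i hi
    simp only [Finset.mem_Icc] at hi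
    have := hle i hi.1 (by omega)
    linarith
  have h1 : ∏ i ∈ Finset.Icc 1 (n - 1), (xs n - xs i)
      ≤ ∏ i ∈ Finset.Icc 1 (n - 1), (C * Real.exp (u i)) :=
    Finset.prod_le_prod hnonneg key
  have hcard : (Finset.Icc 1 (n - 1)).card = n - 1 := by
    rw [Nat.card_Icc]; omega
  have h2 : ∏ i ∈ Finset.Icc 1 (n - 1), (C * Real.exp (u i))
      = C ^ (n - 1) * Real.exp (∑ i ∈ Finset.Icc 1 (n - 1), u i) := by
    rw [Finset.prod_mul_distrib, Finset.prod_const, hcard, Real.exp_sum]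
  have h3' : ∑ i ∈ Finset.Icc 1 (n - 1), u i
      = (n - 1 : ℝ) * P / (p₁ * (x - 1)) * (xs n - (p₁ : ℝ) * x / P)
        - ∑ i ∈ Finset.Icc 1 (n - 1), (P * xs i - p₁) / (p₁ * (x - 1)) := by
    rw [hudef]
    rw [Finset.sum_sub_distrib, Finset.sum_const, hcard, nsmul_eq_mul]
    congr 1
    have : ((n - 1 : ℕ) : ℝ) = (n : ℝ) - 1 := by
      have : (1 : ℕ) ≤ n := hn
      push_cast [Nat.cast_sub this]
      ring
    rw [this]
    field_simp
  calc ∏ i ∈ Finset.Icc 1 (n - 1), (xs n - xs i)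
      ≤ C ^ (n - 1) * Real.exp (∑ i ∈ Finset.Icc 1 (n - 1), u i) := by rw [← h2]; exact h1
    _ = _ := by rw [h3']
end
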